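/- Let A be a unital C*-algebra, t ∈ [0,1], and α a complex number with |α|² = t(1−t). In M₂(A) let p = diag(1,0) and let q be the projection with entries (t, α; α*, 1−t) (scalar multiples of the unit). If a ∈ M₂(A) satisfies 0 ≤ a ≤ p and a ≤ q + (1/2)(1−q), then a ≤ (1/(2−t))p. -/

import Mathlib

open Matrix

/-- A matrix over a C*-algebra is positive iff it is of the form `rᴴ * r`;
the induced order is `m ≤ m'` iff `m' - m` is positive. -/
def MatIsPos {A : Type*} [CStarAlgebra A] (m : Matrix (Fin 2) (Fin 2) A) : Prop :=
  ∃ r : Matrix (Fin 2) (Fin 2) A, m = r.conjTranspose * r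

set_option maxHeartbeats 1000000 in
/-- with `p = diag(1,0)` and `q = (t, α; α*, 1-t)` (`|α|² = t(1-t)`, `t ∈ [0,1]`),
any `a ∈ M₂(A)` with `0 ≤ a ≤ p` and `a ≤ q + (1/2)(1-q)` satisfies `a ≤ (1/(2-t)) p`. -/
theorem stmt1 {A : Type*} [CStarAlgebra A] (t : ℝ) (ht0 : 0 ≤ t) (ht1 : t ≤ 1)
    (α : ℂ) (hα : ‖α‖ ^ 2 = t * (1 - t))
    (p q a : Matrix (Fin 2) (Fin 2) A)
    (hp : p = !![1, 0; 0, 0])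
    (hq : q = !![algebraMap ℂ A (t : ℂ), algebraMap ℂ A α;
        algebraMap ℂ A (starRingEnd ℂ α), algebraMap ℂ A ((1 - t : ℝ) : ℂ)])
    (ha0 : MatIsPos a) (hap : MatIsPos (p - a))
    (haq : MatIsPos (q + (1 / 2 : ℝ) • ((1 : Matrix (Fin 2) (Fin 2) A) - q) - a)) :
    MatIsPos ((1 / (2 - t) : ℝ) • p - a) := by
  letI := CStarAlgebra.spectralOrder A
  letI := CStarAlgebra.spectralOrderedRing A
  obtain ⟨r, hr⟩ := ha0
  obtain ⟨s, hs⟩ := hap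
  obtain ⟨u, hu⟩ := haq
  subst hp; subst hq
  have h7 : ∀ (c : ℝ) (y : A), c • y = algebraMap ℂ A (c : ℂ) * y := by
    intro c y; rw [← smul_one_smul ℂ c y, Algebra.smul_def]; norm_num
  have hent : ∀ (m w : Matrix (Fin 2) (Fin 2) A), m = wᴴ * w →
      ∀ i j, m i j = star (w 0 i) * w 0 j + star (w 1 i) * w 1 j := by
    intro m w h i j
    rw [h, Matrix.mul_apply, Fin.sum_univ_two, Matrix.conjTranspose_apply,
      Matrix.conjTranspose_apply]
  -- a is supported on the (0,0) entry
  have h11r := hent a r hr 1 1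
  have h11s := hent _ s hs 1 1
  simp only [Matrix.sub_apply] at h11s
  have hp11 : (!![(1:A), 0; 0, 0] : Matrix (Fin 2) (Fin 2) A) 1 1 = 0 := by simp
  rw [hp11, zero_sub] at h11s
  have ha11 : a 1 1 = 0 := by
    refine le_antisymm (neg_nonneg.mp ?_) ?_
    · rw [h11s]; exact add_nonneg (star_mul_self_nonneg _) (star_mul_self_nonneg _)
    · rw [h11r]; exact add_nonneg (star_mul_self_nonneg _) (star_mul_self_nonneg _)
  have hsum0 : star (r 0 1) * r 0 1 + star (r 1 1) * r 1 1 = 0 := by rw [← h11r, ha11]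
  have hr01 : r 0 1 = 0 := (CStarRing.star_mul_self_eq_zero_iff _).mp
    ((add_eq_zero_iff_of_nonneg (star_mul_self_nonneg _) (star_mul_self_nonneg _)).mp hsum0).1
  have hr11 : r 1 1 = 0 := (CStarRing.star_mul_self_eq_zero_iff _).mp
    ((add_eq_zero_iff_of_nonneg (star_mul_self_nonneg _) (star_mul_self_nonneg _)).mp hsum0).2
  have ha01 : a 0 1 = 0 := by rw [hent a r hr 0 1, hr01, hr11]; simp
  have ha10 : a 1 0 = 0 := by rw [hent a r hr 1 0, hr01, hr11]; simp
  -- scalar facts in ℂ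
  have hαc : α * (starRingEnd ℂ α) = ((t : ℂ)) * (1 - (t : ℂ)) := by
    rw [Complex.mul_conj']
    norm_cast
  have h2 : (2:ℂ) - (t:ℂ) ≠ 0 := by
    intro h
    have : ((2 - t : ℝ) : ℂ) = 0 := by push_cast; linear_combination h
    exact absurd (Complex.ofReal_eq_zero.mp this) (by linarith)
  set μ : ℂ := -(starRingEnd ℂ α) / ((2 - t : ℝ) : ℂ) with hμ
  have h1 : μ * ((2:ℂ) - (t:ℂ)) = -(starRingEnd ℂ α) := by
    rw [hμ]; push_cast; exact div_mul_cancel₀ _ h2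
  have hscalar : (((1 / (2 - t) : ℝ)) : ℂ) =
      ((t : ℂ) + (1/2) * (1 - (t:ℂ))) + ((1/2) * α) * μ +
        (starRingEnd ℂ μ) * ((1/2) * (starRingEnd ℂ α)) +
        (starRingEnd ℂ μ) * ((((1 - t : ℝ) : ℂ) + (1/2) * (1 - ((1 - t : ℝ) : ℂ))) * μ) := by
    rw [show (((1 / (2 - t) : ℝ)) : ℂ) = ((2:ℂ) - (t:ℂ))⁻¹ by push_cast; rw [one_div]]
    refine mul_left_cancel₀ (pow_ne_zero 2 h2) ?_
    push_cast
    have h4' : ((2:ℂ) - (t:ℂ))⁻¹ * ((2:ℂ) - (t:ℂ)) = 1 := inv_mul_cancel₀ h2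
    linear_combination ((2:ℂ) - (t:ℂ)) * h4' +
      (-(α/2)*((2:ℂ) - (t:ℂ)) - (((2:ℂ) - (t:ℂ))^2/2) * (starRingEnd ℂ μ)) * h1 +
      (((2:ℂ) - (t:ℂ))/2) * hαc
  -- the scalar inequality in A
  set m : A := algebraMap ℂ A μ with hm
  set y0 : A := u 0 0 + u 0 1 * m with hy0
  set y1 : A := u 1 0 + u 1 1 * m with hy1
  set B : Matrix (Fin 2) (Fin 2) A :=
    !![algebraMap ℂ A (t : ℂ), algebraMap ℂ A α;
        algebraMap ℂ A (starRingEnd ℂ α), algebraMap ℂ A ((1 - t : ℝ) : ℂ)] +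
      (1 / 2 : ℝ) • ((1 : Matrix (Fin 2) (Fin 2) A) -
        !![algebraMap ℂ A (t : ℂ), algebraMap ℂ A α;
          algebraMap ℂ A (starRingEnd ℂ α), algebraMap ℂ A ((1 - t : ℝ) : ℂ)]) - a with hB
  have e00 := hent _ u hu 0 0
  have e01 := hent _ u hu 0 1
  have e10 := hent _ u hu 1 0
  have e11 := hent _ u hu 1 1
  have key : star y0 * y0 + star y1 * y1 =
      B 0 0 + B 0 1 * m + star m * B 1 0 + star m * (B 1 1 * m) := by
    rw [e00, e01, e10, e11, hy0, hy1]
    simp only [star_add, StarMul.star_mul]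
    noncomm_ring
  -- entry evaluations of B
  have f00 : B 0 0 = algebraMap ℂ A ((t : ℂ) + (1/2) * (1 - (t:ℂ))) - a 0 0 := by
    have h : B 0 0 = algebraMap ℂ A (t : ℂ) +
        (1/2 : ℝ) • ((1:A) - algebraMap ℂ A (t : ℂ)) - a 0 0 := by
      simp [hB, Matrix.add_apply, Matrix.sub_apply, Matrix.smul_apply, Matrix.one_apply]
    rw [h, h7, show (1:A) = algebraMap ℂ A 1 from (_root_.map_one _).symm, ← map_sub,
      ← _root_.map_mul, ← map_add]
    congr 2
    norm_num
  have f01 : B 0 1 = algebraMap ℂ A ((1/2) * α) := by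
    have h : B 0 1 = algebraMap ℂ A α +
        (1/2 : ℝ) • ((0:A) - algebraMap ℂ A α) - a 0 1 := by
      simp [hB, Matrix.add_apply, Matrix.sub_apply, Matrix.smul_apply, Matrix.one_apply]
    rw [h, ha01, sub_zero, h7, show (0:A) = algebraMap ℂ A 0 from (map_zero _).symm, ← map_sub,
      ← _root_.map_mul, ← map_add]
    congr 1
    push_cast
    ring
  have f10 : B 1 0 = algebraMap ℂ A ((1/2) * (starRingEnd ℂ α)) := by
    have h : B 1 0 = algebraMap ℂ A (starRingEnd ℂ α) +
        (1/2 : ℝ) • ((0:A) - algebraMap ℂ A (starRingEnd ℂ α)) - a 1 0 := by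
      simp [hB, Matrix.add_apply, Matrix.sub_apply, Matrix.smul_apply, Matrix.one_apply]
    rw [h, ha10, sub_zero, h7, show (0:A) = algebraMap ℂ A 0 from (map_zero _).symm, ← map_sub,
      ← _root_.map_mul, ← map_add]
    congr 1
    push_cast
    ring
  have f11 : B 1 1 = algebraMap ℂ A (((1 - t : ℝ) : ℂ) + (1/2) * (1 - ((1 - t : ℝ) : ℂ))) := by
    have h : B 1 1 = algebraMap ℂ A ((1 - t : ℝ) : ℂ) +
        (1/2 : ℝ) • ((1:A) - algebraMap ℂ A ((1 - t : ℝ) : ℂ)) - a 1 1 := by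
      simp [hB, Matrix.add_apply, Matrix.sub_apply, Matrix.smul_apply, Matrix.one_apply]
    rw [h, ha11, sub_zero, h7, show (1:A) = algebraMap ℂ A 1 from (_root_.map_one _).symm,
      ← map_sub, ← _root_.map_mul, ← map_add]
    congr 1
    push_cast
    ring
  have hsm : star m = algebraMap ℂ A (starRingEnd ℂ μ) := by
    rw [hm, ← algebraMap_star_comm]; rfl
  have main : (1 / (2 - t) : ℝ) • (1 : A) - a 0 0 = star y0 * y0 + star y1 * y1 := by
    rw [key, f00, f01, f10, f11, hsm, h7, mul_one, hm]
    simp only [← _root_.map_mul]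
    rw [sub_add_eq_add_sub, sub_add_eq_add_sub, sub_add_eq_add_sub]
    congr 1
    simp only [← map_add]
    refine congrArg _ ?_
    linear_combination hscalar
  have hg : (0 : A) ≤ (1 / (2 - t) : ℝ) • (1 : A) - a 0 0 := by
    rw [main]; exact add_nonneg (star_mul_self_nonneg _) (star_mul_self_nonneg _)
  obtain ⟨b, hbb⟩ : ∃ b : A, (1 / (2 - t) : ℝ) • (1 : A) - a 0 0 = star b * b :=
    ⟨CFC.sqrt _, by
      rw [(IsSelfAdjoint.of_nonneg (CFC.sqrt_nonneg _)).star_eq, CFC.sqrt_mul_sqrt_self _ hg]⟩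
  refine ⟨!![b, 0; 0, 0], ?_⟩
  ext i j
  fin_cases i <;> fin_cases j <;>
    simp [Matrix.mul_apply, Fin.sum_univ_two, Matrix.conjTranspose_apply, ha01, ha10, ha11, hbb]
  rwa [one_div] at hbb
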